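/- arXiv:2203.04536 — 2 statements merged into one kernel-verified Lean document; each statement's English description precedes it below -/
import Mathlib

section
/- For every predictor class P ⊆ [0,1]^X, every distinguisher class D ⊆ [−1,1]^X, every distribution μ over X, every advantage bound ε > 0, and every failure probability bound δ ∈ (0,1), the sample complexity of distribution-specific realizable OI satisfies SAMP-DS-R(P,D,ε,δ,μ) ≥ log( (1 − δ) · N_{μ,D}(P, 2ε) ). Equivalently: if there exists an n-sample learner that for every target p* ∈ P, given n i.i.d. examples from μ_{p*}, outputs a predictor p with ‖p − p*‖_{μ,D} ≤ ε with probability at least 1 − δ, then 2^n ≥ (1 − δ) · N_{μ,D}(P, 2ε). -/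
open scoped ENNReal Pointwise

noncomputable section

namespace OI

/-- Expectation of a real-valued function under a probability mass function. -/
def pexp {α : Type*} (q : PMF α) (f : α → ℝ) : ℝ := ∑' a, (q a).toReal * f a

/-- Inner product of two functions w.r.t. the distribution `μ`. -/
def inn {X : Type*} (μ : PMF X) (f g : X → ℝ) : ℝ := pexp μ fun x => f x * g x

/-- Dual Minkowski (semi)norm of `f` w.r.t. the class `F`. -/
def dnorm {X : Type*} (μ : PMF X) (F : Set (X → ℝ)) (f : X → ℝ) : ℝ :=
  sSup ((fun g => |inn μ f g|) '' F)

/-- `C` is an ε-covering of `G` w.r.t. the seminorm defined by `F`. -/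
def IsCover {X : Type*} (μ : PMF X) (F G : Set (X → ℝ)) (ε : ℝ) (C : Set (X → ℝ)) : Prop :=
  C ⊆ G ∧ ∀ g ∈ G, ∃ c ∈ C, dnorm μ F (g - c) ≤ ε

/-- Covering number `N_{μ,F}(G, ε)` (`⊤` if no finite covering exists). -/
def covN {X : Type*} (μ : PMF X) (F G : Set (X → ℝ)) (ε : ℝ) : ℕ∞ :=
  ⨅ (C : Set (X → ℝ)) (_ : IsCover μ F G ε C), C.encard

/-- Base-2 logarithm of an extended natural number (junk value on `⊤`). -/
def elog2 (N : ℕ∞) : ℝ := Real.logb 2 (N.toNat : ℝ)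

/-- Bernoulli distribution on `Bool` with mean (the truncation to `[0,1]` of) `r`. -/
def bern (r : ℝ) : PMF Bool := PMF.bernoulli (min (Real.toNNReal r) 1) (min_le_right _ _)

/-- The distribution `μ_p` of individual-outcome pairs. -/
def exDist {X : Type*} (μ : PMF X) (p : X → ℝ) : PMF (X × Bool) :=
  μ.bind fun x => (bern (p x)).map fun o => (x, o)

/-- `n` i.i.d. samples from `q`. -/
def iid {α : Type*} (q : PMF α) : (n : ℕ) → PMF (Fin n → α)
  | 0 => PMF.pure Fin.elim0
  | n + 1 => (iid q n).bind fun v => q.map fun a => Fin.cons a v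

/-- Probability of an event under a PMF. -/
def prob {α : Type*} (q : PMF α) (E : Set α) : ℝ≥0∞ := q.toOuterMeasure E

/-- A (possibly randomized) `n`-sample learner. -/
abbrev Learner (X : Type*) (n : ℕ) := (Fin n → X × Bool) → PMF (X → ℝ)

/-- Distribution of the learner output on `n` i.i.d. samples from `μ_{p*}`. -/
def outDist {X : Type*} (μ : PMF X) (pstar : X → ℝ) {n : ℕ} (A : Learner X n) :
    PMF (X → ℝ) :=
  (iid (exDist μ pstar) n).bind A

/-- `p` is a predictor, i.e. takes values in `[0,1]`. -/
def Predictor {X : Type*} (p : X → ℝ) : Prop := ∀ x, p x ∈ Set.Icc (0 : ℝ) 1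

/-- `d` takes values in `[-1,1]`. -/
def Dist1 {X : Type*} (d : X → ℝ) : Prop := ∀ x, d x ∈ Set.Icc (-1 : ℝ) 1

/-- The class `[0,1]^X` of all predictors. -/
def allPred (X : Type*) : Set (X → ℝ) := {p | Predictor p}

/-- The learner `A` succeeds for target `pstar`: with probability at least `1 - δ` it outputs
a predictor whose maximum distinguishing advantage w.r.t. `pstar` over `D` is at most `ε`. -/
def Achieves {X : Type*} (μ : PMF X) (D : Set (X → ℝ)) (ε δ : ℝ) (pstar : X → ℝ) {n : ℕ}
    (A : Learner X n) : Prop :=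
  ENNReal.ofReal (1 - δ) ≤
    prob (outDist μ pstar A) {p | Predictor p ∧ dnorm μ D (p - pstar) ≤ ε}

/-- The agnostic benchmark `inf_{p' ∈ P} ‖p' - pstar‖_{μ,D}`. -/
def agTarget {X : Type*} (μ : PMF X) (P D : Set (X → ℝ)) (pstar : X → ℝ) : ℝ :=
  sInf ((fun p' => dnorm μ D (p' - pstar)) '' P)

/-- The learner `A` succeeds agnostically for target `pstar`. -/
def AchievesAg {X : Type*} (μ : PMF X) (P D : Set (X → ℝ)) (ε δ : ℝ) (pstar : X → ℝ) {n : ℕ}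
    (A : Learner X n) : Prop :=
  ENNReal.ofReal (1 - δ) ≤
    prob (outDist μ pstar A)
      {p | Predictor p ∧ dnorm μ D (p - pstar) ≤ agTarget μ P D pstar + ε}

/-- Distribution-specific realizable OI learner. -/
def DSRL {X : Type*} (μ : PMF X) (P D : Set (X → ℝ)) (ε δ : ℝ) (n : ℕ)
    (A : Learner X n) : Prop :=
  ∀ pstar ∈ P, Achieves μ D ε δ pstar A

/-- Distribution-specific agnostic OI learner. -/
def DSAL {X : Type*} (μ : PMF X) (P D : Set (X → ℝ)) (ε δ : ℝ) (n : ℕ)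
    (A : Learner X n) : Prop :=
  ∀ pstar : X → ℝ, Predictor pstar → AchievesAg μ P D ε δ pstar A

/-- Distribution-free realizable OI learner. -/
def DFRL {X : Type*} (P D : Set (X → ℝ)) (ε δ : ℝ) (n : ℕ) (A : Learner X n) : Prop :=
  ∀ μ : PMF X, DSRL μ P D ε δ n A

/-- Distribution-free agnostic OI learner. -/
def DFAL {X : Type*} (P D : Set (X → ℝ)) (ε δ : ℝ) (n : ℕ) (A : Learner X n) : Prop :=
  ∀ μ : PMF X, DSAL μ P D ε δ n A

/-- Sample complexity of distribution-specific realizable OI. -/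
def SAMPDSR {X : Type*} (μ : PMF X) (P D : Set (X → ℝ)) (ε δ : ℝ) : ℕ∞ :=
  ⨅ (n : ℕ) (_ : ∃ A : Learner X n, DSRL μ P D ε δ n A), (n : ℕ∞)

/-- Sample complexity of distribution-specific agnostic OI. -/
def SAMPDSA {X : Type*} (μ : PMF X) (P D : Set (X → ℝ)) (ε δ : ℝ) : ℕ∞ :=
  ⨅ (n : ℕ) (_ : ∃ A : Learner X n, DSAL μ P D ε δ n A), (n : ℕ∞)

/-- Sample complexity of distribution-free realizable OI. -/
def SAMPDFR {X : Type*} (P D : Set (X → ℝ)) (ε δ : ℝ) : ℕ∞ :=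
  ⨅ (n : ℕ) (_ : ∃ A : Learner X n, DFRL P D ε δ n A), (n : ℕ∞)

/-- Sample complexity of distribution-free agnostic OI. -/
def SAMPDFA {X : Type*} (P D : Set (X → ℝ)) (ε δ : ℝ) : ℕ∞ :=
  ⨅ (n : ℕ) (_ : ∃ A : Learner X n, DFAL P D ε δ n A), (n : ℕ∞)

/-- The points `x 0, …, x (n-1)` are `γ`-fat shattered by `F`. -/
def Shatters {X : Type*} (F : Set (X → ℝ)) (γ : ℝ) {n : ℕ} (x : Fin n → X) : Prop :=
  ∃ r : Fin n → ℝ, ∀ b : Fin n → Bool, ∃ f ∈ F,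
    ∀ i, γ ≤ (if b i then (1 : ℝ) else -1) * (f (x i) - r i)

/-- The `γ`-fat-shattering dimension of `F`. -/
def fatDim {X : Type*} (F : Set (X → ℝ)) (γ : ℝ) : ℕ∞ :=
  ⨆ (n : ℕ) (_ : ∃ x : Fin n → X, Shatters F γ x), (n : ℕ∞)

end OI


open OI

set_option linter.unusedSectionVars false

section Aux

open OI

variable {X : Type} [Nonempty X] (μ : PMF X)

lemma tsum_toReal_pmf : ∑' x, (μ x).toReal = 1 :=
  calc ∑' x, (μ x).toReal = (∑' x, μ x).toReal :=
        (ENNReal.tsum_toReal_eq (fun a => ne_top_of_le_ne_top ENNReal.one_ne_top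
          (PMF.coe_le_one μ a))).symm
    _ = 1 := by rw [PMF.tsum_coe]; exact ENNReal.toReal_one

lemma summable_toReal_pmf : Summable (fun x => (μ x).toReal) :=
  ENNReal.summable_toReal (by rw [PMF.tsum_coe]; exact ENNReal.one_ne_top)

lemma summable_pmf_mul {h : X → ℝ} {C : ℝ} (hC : ∀ x, |h x| ≤ C) :
    Summable (fun x => (μ x).toReal * h x) := by
  have hs : Summable (fun x => (μ x).toReal * C) := (summable_toReal_pmf μ).mul_right C
  have habs : Summable (fun x => |(μ x).toReal * h x|) := by
    refine Summable.of_nonneg_of_le (fun x => abs_nonneg _) (fun x => ?_) hs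
    rw [abs_mul, abs_of_nonneg ENNReal.toReal_nonneg]
    exact mul_le_mul_of_nonneg_left (hC x) ENNReal.toReal_nonneg
  exact habs.of_abs

lemma abs_pexp_le {h : X → ℝ} {C : ℝ} (hC : ∀ x, |h x| ≤ C) : |pexp μ h| ≤ C := by
  have hsum := summable_pmf_mul μ hC
  have habs : Summable (fun x => |(μ x).toReal * h x|) := hsum.abs
  have hnorm : Summable (fun x => ‖(μ x).toReal * h x‖) := by
    simpa only [Real.norm_eq_abs] using habs
  have h1 : |pexp μ h| ≤ ∑' x, |(μ x).toReal * h x| := by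
    rw [pexp, ← Real.norm_eq_abs]
    simpa only [Real.norm_eq_abs] using norm_tsum_le_tsum_norm hnorm
  refine h1.trans ?_
  have h2 : ∑' x, |(μ x).toReal * h x| ≤ ∑' x, (μ x).toReal * C := by
    refine Summable.tsum_le_tsum (fun x => ?_) habs ((summable_toReal_pmf μ).mul_right C)
    rw [abs_mul, abs_of_nonneg ENNReal.toReal_nonneg]
    exact mul_le_mul_of_nonneg_left (hC x) ENNReal.toReal_nonneg
  refine h2.trans ?_
  rw [tsum_mul_right, tsum_toReal_pmf, one_mul]

lemma abs_inn_le {f d : X → ℝ} {C : ℝ} (hf : ∀ x, |f x| ≤ C) (hd : Dist1 d) :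
    |inn μ f d| ≤ C := by
  refine abs_pexp_le μ (fun x => ?_)
  rw [abs_mul]
  have hd1 : |d x| ≤ 1 := abs_le.mpr ⟨(hd x).1, (hd x).2⟩
  calc |f x| * |d x| ≤ C * 1 :=
        mul_le_mul (hf x) hd1 (abs_nonneg _) ((abs_nonneg (f x)).trans (hf x))
    _ = C := mul_one C

lemma bddAbove_inn (D : Set (X → ℝ)) (hD : ∀ d ∈ D, Dist1 d) {f : X → ℝ} {C : ℝ}
    (hf : ∀ x, |f x| ≤ C) : BddAbove ((fun g => |inn μ f g|) '' D) := by
  refine ⟨C, ?_⟩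
  rintro y ⟨d, hd, rfl⟩
  exact abs_inn_le μ hf (hD d hd)

lemma dnorm_le (D : Set (X → ℝ)) (hDne : D.Nonempty) (hD : ∀ d ∈ D, Dist1 d) {f : X → ℝ}
    {C : ℝ} (hf : ∀ x, |f x| ≤ C) : dnorm μ D f ≤ C := by
  refine csSup_le (hDne.image _) ?_
  rintro y ⟨d, hd, rfl⟩
  exact abs_inn_le μ hf (hD d hd)

lemma inn_neg (D : Set (X → ℝ)) (f d : X → ℝ) : inn μ (-f) d = -inn μ f d := by
  rw [inn, inn, pexp, pexp, ← tsum_neg]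
  congr 1; funext x; rw [Pi.neg_apply]; ring

lemma dnorm_neg (D : Set (X → ℝ)) (f : X → ℝ) : dnorm μ D (-f) = dnorm μ D f := by
  rw [dnorm, dnorm]
  congr 1
  refine Set.image_congr (fun d _ => ?_)
  rw [inn_neg μ D, abs_neg]

lemma inn_add {f g : X → ℝ} {Cf Cg : ℝ} (hf : ∀ x, |f x| ≤ Cf) (hg : ∀ x, |g x| ≤ Cg)
    {d : X → ℝ} (hd : Dist1 d) : inn μ (f + g) d = inn μ f d + inn μ g d := by
  have hd1 : ∀ x, |d x| ≤ 1 := fun x => abs_le.mpr ⟨(hd x).1, (hd x).2⟩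
  have hfd : ∀ x, |f x * d x| ≤ Cf := fun x => by
    rw [abs_mul]
    calc |f x| * |d x| ≤ Cf * 1 :=
          mul_le_mul (hf x) (hd1 x) (abs_nonneg _) ((abs_nonneg (f x)).trans (hf x))
      _ = Cf := mul_one _
  have hgd : ∀ x, |g x * d x| ≤ Cg := fun x => by
    rw [abs_mul]
    calc |g x| * |d x| ≤ Cg * 1 :=
          mul_le_mul (hg x) (hd1 x) (abs_nonneg _) ((abs_nonneg (g x)).trans (hg x))
      _ = Cg := mul_one _
  rw [inn, inn, inn, pexp, pexp, pexp,
    ← Summable.tsum_add (summable_pmf_mul μ hfd) (summable_pmf_mul μ hgd)]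
  congr 1; funext x; rw [Pi.add_apply]; ring

lemma dnorm_triangle (D : Set (X → ℝ)) (hDne : D.Nonempty) (hD : ∀ d ∈ D, Dist1 d)
    {f g : X → ℝ} {Cf Cg : ℝ} (hf : ∀ x, |f x| ≤ Cf) (hg : ∀ x, |g x| ≤ Cg) :
    dnorm μ D (f + g) ≤ dnorm μ D f + dnorm μ D g := by
  refine csSup_le (hDne.image _) ?_
  rintro y ⟨d, hd, rfl⟩
  show |inn μ (f + g) d| ≤ _
  rw [inn_add μ hf hg (hD d hd)]
  calc |inn μ f d + inn μ g d| ≤ |inn μ f d| + |inn μ g d| := abs_add_le _ _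
    _ ≤ dnorm μ D f + dnorm μ D g := by
        refine add_le_add ?_ ?_ <;>
          exact le_csSup (bddAbove_inn μ D hD (by assumption)) (Set.mem_image_of_mem _ hd)

end Aux

section ProbAux

open OI

lemma iid_apply {α : Type*} (q : PMF α) : ∀ (n : ℕ) (t : Fin n → α), iid q n t = ∏ i, q (t i) := by
  intro n
  classical
  induction n with
  | zero =>
    intro t
    have ht : t = Fin.elim0 := funext fun i => i.elim0
    subst ht
    simp [iid, PMF.pure_apply]
  | succ n ih =>
    intro t
    have hmap : ∀ v : Fin n → α, (q.map fun a => Fin.cons a v) t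
        = if v = Fin.tail t then q (t 0) else 0 := by
      intro v
      rw [PMF.map_apply]
      by_cases hv : v = Fin.tail t
      · subst hv
        rw [if_pos rfl]
        refine (tsum_eq_single (t 0) fun b hb => ?_).trans
          (if_pos (Fin.cons_self_tail t).symm)
        exact if_neg fun hc => hb (by rw [hc, Fin.cons_zero])
      · rw [if_neg hv]
        refine ENNReal.tsum_eq_zero.mpr fun a => if_neg fun hc => hv ?_
        rw [hc, Fin.tail_cons]
    rw [show iid q (n+1) = (iid q n).bind fun v => q.map fun a => Fin.cons a v from rfl,
      PMF.bind_apply]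
    simp only [hmap]
    have h1 : ∀ b : Fin n → α, b ≠ Fin.tail t →
        iid q n b * (if b = Fin.tail t then q (t 0) else 0) = 0 :=
      fun b hb => by rw [if_neg hb, mul_zero]
    rw [tsum_eq_single (Fin.tail t) h1]
    rw [if_pos rfl, ih, Fin.prod_univ_succ, mul_comm]
    rfl

lemma exDist_apply {α : Type*} (μ : PMF α) (p : α → ℝ) (x : α) (o : Bool) :
    exDist μ p (x, o) = μ x * bern (p x) o := by
  classical
  rw [exDist, PMF.bind_apply]
  have hmap : ∀ y, ((bern (p y)).map fun o' => (y, o')) (x, o)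
      = if y = x then bern (p y) o else 0 := by
    intro y
    rw [PMF.map_apply]
    by_cases hy : y = x
    · subst hy
      rw [if_pos rfl]
      refine (tsum_eq_single o fun b hb => ?_).trans (if_pos rfl)
      exact if_neg fun hc => hb ((Prod.ext_iff.mp hc).2.symm)
    · rw [if_neg hy]
      exact ENNReal.tsum_eq_zero.mpr fun b => if_neg fun hc => hy ((Prod.ext_iff.mp hc).1.symm)
  simp only [hmap]
  have h1 : ∀ y : α, y ≠ x → μ y * (if y = x then bern (p y) o else 0) = 0 :=
    fun y hy => by rw [if_neg hy, mul_zero]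
  rw [tsum_eq_single x h1, if_pos rfl]

lemma prob_bind {α β : Type*} (q : PMF α) (f : α → PMF β) (E : Set β) :
    prob (q.bind f) E = ∑' a, q a * prob (f a) E := by
  simp only [prob, PMF.toOuterMeasure_apply]
  calc ∑' b, E.indicator (⇑(q.bind f)) b
      = ∑' b, ∑' a, E.indicator (fun b => q a * f a b) b := by
        congr 1; funext b
        by_cases hb : b ∈ E
        · simp [Set.indicator_of_mem hb, PMF.bind_apply]
        · simp [Set.indicator_of_notMem hb]
    _ = ∑' a, ∑' b, E.indicator (fun b => q a * f a b) b := ENNReal.tsum_comm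
    _ = ∑' a, q a * ∑' b, E.indicator (⇑(f a)) b := by
        congr 1; funext a
        rw [← ENNReal.tsum_mul_left]
        congr 1; funext b
        by_cases hb : b ∈ E
        · simp [Set.indicator_of_mem hb]
        · simp [Set.indicator_of_notMem hb]

lemma prob_le_one {α : Type*} (q : PMF α) (E : Set α) : prob q E ≤ 1 := by
  rw [prob, PMF.toOuterMeasure_apply]
  calc ∑' a, E.indicator (⇑q) a ≤ ∑' a, q a :=
        ENNReal.tsum_le_tsum fun a => Set.indicator_apply_le fun _ => le_rfl
    _ = 1 := PMF.tsum_coe q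

lemma tsum_prod_count {α : Type*} (μ : PMF α) (n : ℕ) :
    ∑' t : Fin n → α × Bool, ∏ i, μ (t i).1 = 2 ^ n := by
  calc ∑' t : Fin n → α × Bool, ∏ i, μ (t i).1
      = ∑' z : (Fin n → α) × (Fin n → Bool),
          ∏ i, μ (((Equiv.arrowProdEquivProdArrow (Fin n) (fun _ => α) (fun _ => Bool)).symm z) i).1 :=
        (Equiv.tsum_eq _ _).symm
    _ = ∑' z : (Fin n → α) × (Fin n → Bool), ∏ i, μ (z.1 i) := by
        refine tsum_congr fun z => Finset.prod_congr rfl fun i _ => ?_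
        simp [Equiv.arrowProdEquivProdArrow]
    _ = ∑' xv : Fin n → α, ∑' _ov : Fin n → Bool, ∏ i, μ (xv i) :=
        ENNReal.tsum_prod (f := fun (xv : Fin n → α) (_ov : Fin n → Bool) => ∏ i, μ (xv i))
    _ = ∑' xv : Fin n → α, (2 ^ n : ℝ≥0∞) * ∏ i, μ (xv i) := by
        congr 1; funext xv
        rw [tsum_fintype, Finset.sum_const, nsmul_eq_mul]
        congr 1
        simp [Fintype.card_fun]
    _ = (2 ^ n : ℝ≥0∞) * ∑' xv : Fin n → α, ∏ i, μ (xv i) := ENNReal.tsum_mul_left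
    _ = 2 ^ n := by
        have h1 : ∑' xv : Fin n → α, ∏ i, μ (xv i) = 1 := by
          calc ∑' xv : Fin n → α, ∏ i, μ (xv i) = ∑' xv, iid μ n xv := by
                congr 1; funext xv; exact (iid_apply μ n xv).symm
            _ = 1 := PMF.tsum_coe _
        rw [h1, mul_one]

lemma sum_indicator_le {ι β : Type*} (S : Finset ι) (E : ι → Set β)
    (hdisj : ∀ i ∈ S, ∀ j ∈ S, i ≠ j → ∀ b, b ∈ E i → b ∉ E j) (f : β → ℝ≥0∞) (b : β) :
    ∑ i ∈ S, (E i).indicator f b ≤ f b := by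
  by_cases h : ∃ i ∈ S, b ∈ E i
  · obtain ⟨i0, hi0, hb⟩ := h
    rw [Finset.sum_eq_single_of_mem i0 hi0
      (fun j hj hne => Set.indicator_of_notMem (fun hbj => hdisj i0 hi0 j hj hne.symm b hb hbj) f)]
    exact le_of_eq (Set.indicator_of_mem hb f)
  · push_neg at h
    rw [Finset.sum_eq_zero fun j hj => Set.indicator_of_notMem (h j hj) f]
    exact zero_le

end ProbAux

section MainAux

open OI

variable {X : Type} [Nonempty X]

lemma counting (μ : PMF X) (D : Set (X → ℝ)) (ε δ : ℝ) (n : ℕ) (A : Learner X n)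
    (S : Finset (X → ℝ))
    (hach : ∀ p ∈ S, ENNReal.ofReal (1 - δ) ≤
      prob (outDist μ p A) {g | Predictor g ∧ dnorm μ D (g - p) ≤ ε})
    (hdisj : ∀ p ∈ S, ∀ q ∈ S, p ≠ q → ∀ g : X → ℝ,
      g ∈ {g : X → ℝ | Predictor g ∧ dnorm μ D (g - p) ≤ ε} →
      g ∉ {g : X → ℝ | Predictor g ∧ dnorm μ D (g - q) ≤ ε}) :
    ENNReal.ofReal (1 - δ) * S.card ≤ 2 ^ n := by
  classical
  set E : (X → ℝ) → Set (X → ℝ) := fun p => {g | Predictor g ∧ dnorm μ D (g - p) ≤ ε} with hE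
  have hsumprob : ∀ t : Fin n → X × Bool, ∑ p ∈ S, prob (A t) (E p) ≤ 1 := by
    intro t
    calc ∑ p ∈ S, prob (A t) (E p) = ∑ p ∈ S, ∑' g, (E p).indicator (⇑(A t)) g := by
          refine Finset.sum_congr rfl fun p _ => ?_
          rw [prob, PMF.toOuterMeasure_apply]
      _ = ∑' g, ∑ p ∈ S, (E p).indicator (⇑(A t)) g :=
          (Summable.tsum_finsetSum fun p _ => ENNReal.summable).symm
      _ ≤ ∑' g, (A t) g := ENNReal.tsum_le_tsum fun g => sum_indicator_le S E hdisj _ g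
      _ = 1 := PMF.tsum_coe _
  calc ENNReal.ofReal (1 - δ) * S.card = ∑ _p ∈ S, ENNReal.ofReal (1 - δ) := by
        rw [Finset.sum_const, nsmul_eq_mul, mul_comm]
    _ ≤ ∑ p ∈ S, prob (outDist μ p A) (E p) := Finset.sum_le_sum hach
    _ = ∑ p ∈ S, ∑' t : Fin n → X × Bool,
          (∏ i, μ (t i).1 * bern (p (t i).1) (t i).2) * prob (A t) (E p) := by
        refine Finset.sum_congr rfl fun p _ => ?_
        rw [outDist, prob_bind]
        refine tsum_congr fun t => ?_
        congr 1
        rw [iid_apply]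
        exact Finset.prod_congr rfl fun i _ => exDist_apply μ p (t i).1 (t i).2
    _ = ∑' t : Fin n → X × Bool, ∑ p ∈ S,
          (∏ i, μ (t i).1 * bern (p (t i).1) (t i).2) * prob (A t) (E p) :=
        (Summable.tsum_finsetSum fun p _ => ENNReal.summable).symm
    _ ≤ ∑' t : Fin n → X × Bool, ∏ i, μ (t i).1 := by
        refine ENNReal.tsum_le_tsum fun t => ?_
        calc ∑ p ∈ S, (∏ i, μ (t i).1 * bern (p (t i).1) (t i).2) * prob (A t) (E p)
            ≤ ∑ p ∈ S, (∏ i, μ (t i).1) * prob (A t) (E p) := by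
              refine Finset.sum_le_sum fun p _ => ?_
              refine mul_le_mul' ?_ le_rfl
              rw [Finset.prod_mul_distrib]
              calc (∏ i, μ (t i).1) * ∏ i, bern (p (t i).1) (t i).2
                  ≤ (∏ i, μ (t i).1) * 1 := mul_le_mul' le_rfl
                    (Finset.prod_le_one (fun i _ => zero_le)
                      (fun i _ => PMF.coe_le_one _ _))
                _ = ∏ i, μ (t i).1 := mul_one _
          _ = (∏ i, μ (t i).1) * ∑ p ∈ S, prob (A t) (E p) := by rw [Finset.mul_sum]
          _ ≤ (∏ i, μ (t i).1) * 1 := mul_le_mul' le_rfl (hsumprob t)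
          _ = ∏ i, μ (t i).1 := mul_one _
    _ = 2 ^ n := tsum_prod_count μ n

lemma sep_disjoint (μ : PMF X) (D : Set (X → ℝ)) (hDne : D.Nonempty)
    (hD : ∀ d ∈ D, Dist1 d) {ε : ℝ} {p q : X → ℝ} (hp : Predictor p) (hq : Predictor q)
    (hsep : 2 * ε < dnorm μ D (p - q)) :
    ∀ g : X → ℝ, g ∈ {g : X → ℝ | Predictor g ∧ dnorm μ D (g - p) ≤ ε} →
      g ∉ {g : X → ℝ | Predictor g ∧ dnorm μ D (g - q) ≤ ε} := by
  rintro g ⟨hg, h1⟩ ⟨-, h2⟩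
  have habs : ∀ a b : X → ℝ, Predictor a → Predictor b → ∀ x, |(a - b) x| ≤ 1 := by
    intro a b ha hb x
    have h1' := ha x
    have h2' := hb x
    simp only [Set.mem_Icc] at h1' h2'
    rw [Pi.sub_apply, abs_le]
    constructor <;> linarith
  have key : dnorm μ D (p - q) ≤ dnorm μ D (p - g) + dnorm μ D (g - q) := by
    have hpq : p - q = (p - g) + (g - q) := by
      funext x
      simp only [Pi.sub_apply, Pi.add_apply]
      ring
    rw [hpq]
    exact dnorm_triangle μ D hDne hD (habs p g hp hg) (habs g q hg hq)
  have hpg : dnorm μ D (p - g) = dnorm μ D (g - p) := by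
    rw [← neg_sub g p, dnorm_neg]
  linarith

end MainAux


/-- sample complexity lower bound for distribution-specific realizable OI:
if an `n`-sample learner succeeds (with advantage `ε` and failure probability `δ`) for every
target in `P`, then `2^n ≥ (1 − δ) · N_{μ,D}(P, 2ε)`. -/
theorem statement_2 {X : Type} [Nonempty X] (μ : PMF X) (P D : Set (X → ℝ))
    (hPne : P.Nonempty) (hP : ∀ p ∈ P, Predictor p)
    (hDne : D.Nonempty) (hD : ∀ d ∈ D, Dist1 d)
    (ε δ : ℝ) (hε : 0 < ε) (hδ : δ ∈ Set.Ioo (0 : ℝ) 1)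
    (n : ℕ) (A : Learner X n) (hA : DSRL μ P D ε δ n A) :
    ENNReal.ofReal (1 - δ) * (covN μ D P (2 * ε) : ℝ≥0∞) ≤ 2 ^ n := by
  classical
  have hδ1 : (0:ℝ) < 1 - δ := by linarith [hδ.2]
  have hpos : 0 < ENNReal.ofReal (1 - δ) := ENNReal.ofReal_pos.mpr hδ1
  set Sep : Finset (X → ℝ) → Prop := fun S => (↑S : Set (X → ℝ)) ⊆ P ∧
    ∀ p ∈ S, ∀ q ∈ S, p ≠ q → 2 * ε < dnorm μ D (p - q) with hSepDef
  have hcount : ∀ S : Finset (X → ℝ), Sep S → ENNReal.ofReal (1 - δ) * S.card ≤ 2 ^ n := by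
    rintro S ⟨hsub, hsep⟩
    refine counting μ D ε δ n A S (fun p hp => hA p (hsub hp)) ?_
    intro p hp q hq hne
    exact sep_disjoint μ D hDne hD (hP p (hsub hp)) (hP q (hsub hq)) (hsep p hp q hq hne)
  have hR : (2 ^ n / ENNReal.ofReal (1 - δ) : ℝ≥0∞) ≠ ⊤ :=
    (ENNReal.div_lt_top (ENNReal.pow_ne_top ENNReal.ofNat_ne_top) hpos.ne').ne
  obtain ⟨K, hK⟩ := ENNReal.exists_nat_gt hR
  have hcard : ∀ S : Finset (X → ℝ), Sep S → S.card ≤ K := by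
    intro S hS
    have h1 : (S.card : ℝ≥0∞) ≤ 2 ^ n / ENNReal.ofReal (1 - δ) := by
      rw [ENNReal.le_div_iff_mul_le (Or.inl hpos.ne') (Or.inl ENNReal.ofReal_ne_top)]
      rw [mul_comm]
      exact hcount S hS
    exact_mod_cast (h1.trans_lt hK).le
  set T : Set ℕ := {k | ∃ S : Finset (X → ℝ), Sep S ∧ S.card = k} with hT
  obtain ⟨p0, hp0⟩ := hPne
  have hTne : T.Nonempty := by
    refine ⟨1, {p0}, ⟨?_, ?_⟩, Finset.card_singleton p0⟩
    · intro x hx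
      rw [Finset.coe_singleton, Set.mem_singleton_iff] at hx
      exact hx ▸ hp0
    · intro p hp q hq hne
      rw [Finset.mem_singleton] at hp hq
      exact absurd (hp.trans hq.symm) hne
  have hTbdd : BddAbove T := ⟨K, fun k ⟨S, hS, hk⟩ => hk ▸ hcard S hS⟩
  obtain ⟨S, hS, hScard⟩ : ∃ S : Finset (X → ℝ), Sep S ∧ S.card = sSup T :=
    Nat.sSup_mem hTne hTbdd
  have hcover : IsCover μ D P (2 * ε) ↑S := by
    refine ⟨hS.1, fun g hg => ?_⟩
    by_contra hno
    push_neg at hno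
    have hno' : ∀ c ∈ S, 2 * ε < dnorm μ D (g - c) := fun c hc =>
      hno c (Finset.mem_coe.mpr hc)
    have hgS : g ∉ S := by
      intro hgS
      have hz : ∀ x, |(g - g) x| ≤ 0 := fun x => by
        rw [Pi.sub_apply, sub_self, abs_zero]
      have h0 : dnorm μ D (g - g) ≤ 0 := dnorm_le μ D hDne hD hz
      have := hno' g hgS
      linarith
    have hSep' : Sep (insert g S) := by
      constructor
      · intro x hx
        rw [Finset.coe_insert, Set.mem_insert_iff] at hx
        rcases hx with rfl | hx
        · exact hg
        · exact hS.1 hx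
      · intro p hp q hq hne
        rcases Finset.mem_insert.mp hp with hp' | hp' <;>
          rcases Finset.mem_insert.mp hq with hq' | hq'
        · exact absurd (hp'.trans hq'.symm) hne
        · subst hp'
          exact hno' q hq'
        · subst hq'
          rw [← neg_sub q p, dnorm_neg]
          exact hno' p hp'
        · exact hS.2 p hp' q hq' hne
    have hmem : S.card + 1 ∈ T :=
      ⟨insert g S, hSep', by rw [Finset.card_insert_of_notMem hgS]⟩
    have hle := le_csSup hTbdd hmem
    omega
  have hcov : covN μ D P (2 * ε) ≤ (S.card : ℕ∞) := by
    have h1 : covN μ D P (2 * ε) ≤ (↑S : Set (X → ℝ)).encard := iInf₂_le _ hcover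
    rwa [Set.encard_coe_eq_coe_finsetCard] at h1
  have hcast : ((covN μ D P (2 * ε) : ℕ∞) : ℝ≥0∞) ≤ (S.card : ℝ≥0∞) := by
    exact_mod_cast hcov
  calc ENNReal.ofReal (1 - δ) * (covN μ D P (2 * ε) : ℝ≥0∞)
      ≤ ENNReal.ofReal (1 - δ) * (S.card : ℝ≥0∞) := mul_le_mul' le_rfl hcast
    _ ≤ 2 ^ n := hcount S hS
end
end

section
/- For every predictor class P ⊆ [0,1]^X, every distinguisher class D ⊆ [−1,1]^X, every distribution μ over X, every advantage bound ε > 0, and every failure probability bound δ ∈ (0,1), the sample complexity of distribution-specific realizable OI satisfies SAMP-DS-R(P,D,ε,δ,μ) ≤ O( ε^{−2} ( log N_{μ,Q}(D, ε/2) + log(2/δ) ) ) ≤ O( ε^{−2} ( log N_{μ,P}(D, ε/4) + log(2/δ) ) ), where Q = P − P = {p₁ − p₂ : p₁, p₂ ∈ P}. -/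
open scoped ENNReal Pointwise

noncomputable section

open OI

noncomputable section
namespace OIAux
variable {α : Type*} {X : Type*}

/-- `e^u ≤ 1 + u + u²` for `|u| ≤ 1`. -/
lemma exp_le_one_add {u : ℝ} (h : |u| ≤ 1) : Real.exp u ≤ 1 + u + u ^ 2 := by
  have h0 := Real.exp_bound h (n := 2) (by norm_num)
  have h2 : Real.exp u - (1 + u) ≤ u ^ 2 * (3 / 4) := by
    have h4 : |Real.exp u - ∑ i ∈ Finset.range 2, u ^ i / i.factorial| ≤
        |u| ^ 2 * ((2:ℕ).succ / ((2:ℕ).factorial * 2)) := h0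
    simp [Finset.sum_range_succ] at h4
    have h5 := (abs_le.mp h4).2
    nlinarith [sq_abs u]
  nlinarith [sq_nonneg u]

/-- `e^u ≤ u + e^{u²}` for all real `u`. -/
lemma exp_le_add_exp_sq (u : ℝ) : Real.exp u ≤ u + Real.exp (u ^ 2) := by
  rcases le_or_gt |u| 1 with h | h
  · have h1 : Real.exp u ≤ 1 + u + u ^ 2 := exp_le_one_add h
    have h2 : 1 + u ^ 2 ≤ Real.exp (u ^ 2) := by
      have := Real.add_one_le_exp (u ^ 2); linarith
    linarith
  · rcases le_or_gt 0 u with hu | hu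
    · have : u ≤ u ^ 2 := by nlinarith [abs_of_nonneg hu]
      have := Real.exp_le_exp.mpr this
      linarith
    · have h1 : Real.exp u < 1 := Real.exp_lt_one_iff.mpr hu
      have h2 : 1 + u ^ 2 ≤ Real.exp (u ^ 2) := by
        have := Real.add_one_le_exp (u ^ 2); linarith
      have : -u ≤ u ^ 2 := by nlinarith [abs_of_neg hu]
      linarith

lemma summable_w (q : PMF α) : Summable (fun a => (q a).toReal) :=
  ENNReal.summable_toReal (by rw [q.tsum_coe]; exact ENNReal.one_ne_top)

lemma tsum_w (q : PMF α) : ∑' a, (q a).toReal = 1 := by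
  rw [← ENNReal.tsum_toReal_eq (fun a => q.apply_ne_top a), q.tsum_coe, ENNReal.toReal_one]

lemma summable_wf (q : PMF α) {f : α → ℝ} {B : ℝ} (hB : ∀ a, |f a| ≤ B) :
    Summable fun a => (q a).toReal * f a := by
  apply Summable.of_abs
  refine Summable.of_nonneg_of_le (fun a => abs_nonneg _) (fun a => ?_) ((summable_w q).mul_right B)
  rw [abs_mul, abs_of_nonneg ENNReal.toReal_nonneg]
  exact mul_le_mul_of_nonneg_left (hB a) ENNReal.toReal_nonneg

lemma pexp_mono (q : PMF α) {f g : α → ℝ} (hf : Summable fun a => (q a).toReal * f a)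
    (hg : Summable fun a => (q a).toReal * g a) (h : ∀ a, f a ≤ g a) :
    OI.pexp q f ≤ OI.pexp q g :=
  Summable.tsum_le_tsum (fun a => mul_le_mul_of_nonneg_left (h a) ENNReal.toReal_nonneg) hf hg

lemma pexp_smul_add_const (q : PMF α) (f : α → ℝ) (c k : ℝ)
    (hf : Summable fun a => (q a).toReal * f a) :
    OI.pexp q (fun a => c * f a + k) = c * OI.pexp q f + k := by
  unfold OI.pexp
  have h1 : ∀ a, (q a).toReal * (c * f a + k) = c * ((q a).toReal * f a) + (q a).toReal * k := by
    intro a; ring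
  simp_rw [h1]
  rw [Summable.tsum_add (hf.mul_left c) ((summable_w q).mul_right k), tsum_mul_left, tsum_mul_right,
    tsum_w, one_mul]

lemma abs_pexp_le (q : PMF α) {f : α → ℝ} {B : ℝ} (hB : ∀ a, |f a| ≤ B) :
    |OI.pexp q f| ≤ B := by
  have hs := summable_wf q hB
  have h1 : |OI.pexp q f| ≤ ∑' a, |(q a).toReal * f a| := by
    unfold OI.pexp
    calc |∑' a, (q a).toReal * f a| = ‖∑' a, (q a).toReal * f a‖ := (Real.norm_eq_abs _).symm
      _ ≤ ∑' a, ‖(q a).toReal * f a‖ := norm_tsum_le_tsum_norm (by simpa only [Real.norm_eq_abs] using hs.abs)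
      _ = ∑' a, |(q a).toReal * f a| := by simp only [Real.norm_eq_abs]
  refine h1.trans ?_
  have h2 : ∑' a, |(q a).toReal * f a| ≤ ∑' a, (q a).toReal * B := by
    refine Summable.tsum_le_tsum (fun a => ?_) hs.abs ((summable_w q).mul_right B)
    rw [abs_mul, abs_of_nonneg ENNReal.toReal_nonneg]
    exact mul_le_mul_of_nonneg_left (hB a) ENNReal.toReal_nonneg
  rw [tsum_mul_right, tsum_w, one_mul] at h2
  exact h2

lemma pexp_sub (q : PMF α) (f g : α → ℝ) (hf : Summable fun a => (q a).toReal * f a)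
    (hg : Summable fun a => (q a).toReal * g a) :
    OI.pexp q (fun a => f a - g a) = OI.pexp q f - OI.pexp q g := by
  unfold OI.pexp
  simp_rw [mul_sub]
  exact Summable.tsum_sub hf hg

lemma pexp_add (q : PMF α) (f g : α → ℝ) (hf : Summable fun a => (q a).toReal * f a)
    (hg : Summable fun a => (q a).toReal * g a) :
    OI.pexp q (fun a => f a + g a) = OI.pexp q f + OI.pexp q g := by
  unfold OI.pexp
  simp_rw [mul_add]
  exact Summable.tsum_add hf hg
variable {α : Type*} {β : Type*} {ι : Type*}

def EE (q : PMF α) (g : α → ℝ≥0∞) : ℝ≥0∞ := ∑' a, q a * g a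

lemma EE_const_mul (q : PMF α) (c : ℝ≥0∞) (g : α → ℝ≥0∞) :
    EE q (fun a => c * g a) = c * EE q g := by
  unfold EE
  calc ∑' a, q a * (c * g a) = ∑' a, c * (q a * g a) := tsum_congr fun a => by ring
    _ = c * ∑' a, q a * g a := ENNReal.tsum_mul_left

lemma EE_pure (a : α) (g : α → ℝ≥0∞) : EE (PMF.pure a) g = g a := by
  unfold EE
  rw [tsum_eq_single a (fun b hb => by simp [PMF.pure_apply, hb])]
  simp [PMF.pure_apply]

lemma EE_bind (q : PMF α) (k : α → PMF β) (g : β → ℝ≥0∞) :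
    EE (q.bind k) g = EE q fun a => EE (k a) g := by
  unfold EE
  simp_rw [PMF.bind_apply]
  calc ∑' b, (∑' a, q a * k a b) * g b
      = ∑' b, ∑' a, q a * k a b * g b := by simp_rw [ENNReal.tsum_mul_right]
    _ = ∑' a, ∑' b, q a * k a b * g b := ENNReal.tsum_comm
    _ = ∑' a, q a * ∑' b, k a b * g b := by simp_rw [mul_assoc, ENNReal.tsum_mul_left]

lemma EE_map (q : PMF α) (h : α → β) (g : β → ℝ≥0∞) :
    EE (q.map h) g = EE q fun a => g (h a) := by
  rw [PMF.map, EE_bind]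
  simp_rw [Function.comp, EE_pure]

lemma EE_iid (q : PMF α) (g : α → ℝ≥0∞) :
    ∀ n, EE (OI.iid q n) (fun v => ∏ i, g (v i)) = (EE q g) ^ n
  | 0 => by simp [OI.iid, EE_pure]
  | n + 1 => by
    rw [OI.iid, EE_bind]
    have h1 : ∀ v : Fin n → α,
        (EE (q.map fun a => Fin.cons a v) fun w => ∏ i, g (w i)) = EE q g * ∏ i, g (v i) := by
      intro v
      rw [EE_map]
      have h2 : ∀ a, (∏ i, g (Fin.cons a v i)) = g a * ∏ i, g (v i) := by
        intro a
        rw [Fin.prod_univ_succ]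
        simp
      simp_rw [h2]
      unfold EE
      simp only [← mul_assoc]
      rw [ENNReal.tsum_mul_right]
    simp_rw [h1]
    rw [EE_const_mul (OI.iid q n) (EE q g) fun v => ∏ i, g (v i), EE_iid q g n, pow_succ,
      mul_comm]

lemma prob_le_EE (q : PMF α) (E : Set α) (g : α → ℝ≥0∞) (h : ∀ a ∈ E, 1 ≤ g a) :
    OI.prob q E ≤ EE q g := by
  rw [OI.prob, PMF.toOuterMeasure_apply]
  refine ENNReal.tsum_le_tsum fun a => ?_
  by_cases ha : a ∈ E
  · simp only [Set.indicator_of_mem ha]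
    calc q a = q a * 1 := (mul_one _).symm
      _ ≤ q a * g a := mul_le_mul_right (h a ha) _
  · simp [Set.indicator_of_notMem ha]

lemma prob_univ (q : PMF α) : OI.prob q Set.univ = 1 := by
  rw [OI.prob, PMF.toOuterMeasure_apply]
  simp [Set.indicator_univ, q.tsum_coe]

lemma prob_mono (q : PMF α) {s t : Set α} (h : s ⊆ t) : OI.prob q s ≤ OI.prob q t :=
  MeasureTheory.measure_mono h

lemma prob_union_le (q : PMF α) (s t : Set α) :
    OI.prob q (s ∪ t) ≤ OI.prob q s + OI.prob q t :=
  MeasureTheory.measure_union_le s t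

lemma prob_empty (q : PMF α) : OI.prob q ∅ = 0 := by
  rw [OI.prob, PMF.toOuterMeasure_apply]; simp

lemma prob_biUnion_le (q : PMF α) (S : Finset ι) (B : ι → Set α) :
    OI.prob q (⋃ i ∈ S, B i) ≤ ∑ i ∈ S, OI.prob q (B i) := by
  classical
  induction S using Finset.induction with
  | empty => simp [prob_empty]
  | @insert j S hj ih =>
      rw [Finset.set_biUnion_insert, Finset.sum_insert hj]
      exact (prob_union_le q _ _).trans (add_le_add_right ih _)

lemma EE_ofReal (q : PMF α) (g : α → ℝ) (h0 : ∀ a, 0 ≤ g a) {B : ℝ} (hB : ∀ a, g a ≤ B) :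
    EE q (fun a => ENNReal.ofReal (g a)) = ENNReal.ofReal (OI.pexp q g) := by
  have hB' : ∀ a, |g a| ≤ B := fun a => by rw [abs_of_nonneg (h0 a)]; exact hB a
  unfold EE OI.pexp
  rw [ENNReal.ofReal_tsum_of_nonneg (fun a => mul_nonneg ENNReal.toReal_nonneg (h0 a))
    (summable_wf q hB')]
  refine tsum_congr fun a => ?_
  rw [ENNReal.ofReal_mul ENNReal.toReal_nonneg, ENNReal.ofReal_toReal (q.apply_ne_top a)]

lemma tail_bound (q : PMF α) (h : α → ℝ) (m t : ℝ) (hb : ∀ a, |h a| ≤ 1)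
    (hm : OI.pexp q h = m) (hmb : |m| ≤ 1) (ht : 0 < t) (ht1 : t ≤ 1) (n : ℕ) :
    OI.prob (OI.iid q n) {s | (n : ℝ) * (m + t) ≤ ∑ i, h (s i)} ≤
      ENNReal.ofReal (Real.exp (-((n : ℝ) * (t ^ 2 / 72)))) := by
  set l := t / 36 with hl
  have hl0 : 0 < l := by positivity
  have hl1 : l ≤ 1 / 36 := by rw [hl]; linarith
  set a := m + t with ha
  have hmb' := abs_le.mp hmb
  have hab : |a| ≤ 2 := by rw [abs_le]; constructor <;> [linarith; linarith]
  set g : α → ℝ := fun z => Real.exp (l * (h z - a)) with hg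
  have hga : ∀ z, |h z - a| ≤ 3 := by
    intro z
    have h1 := abs_le.mp (hb z); have h2 := abs_le.mp hab
    rw [abs_le]; constructor <;> [linarith; linarith]
  have hgpos : ∀ z, 0 ≤ g z := fun z => (Real.exp_pos _).le
  have hgB : ∀ z, g z ≤ Real.exp (3 * l) := by
    intro z
    apply Real.exp_le_exp.mpr
    have h1 := abs_le.mp (hga z)
    nlinarith
  -- step 1: Chernoff bound by the product of exponential moments
  have step1 : OI.prob (OI.iid q n) {s | (n : ℝ) * (m + t) ≤ ∑ i, h (s i)} ≤
      EE (OI.iid q n) fun s => ∏ i, ENNReal.ofReal (g (s i)) := by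
    refine prob_le_EE _ _ _ fun s hs => ?_
    rw [← ENNReal.ofReal_prod_of_nonneg (fun i _ => hgpos (s i)), ← Real.exp_sum]
    rw [show (1 : ℝ≥0∞) = ENNReal.ofReal 1 by simp]
    apply ENNReal.ofReal_le_ofReal
    apply Real.one_le_exp
    have hsum : ∑ i : Fin n, l * (h (s i) - a) = l * ((∑ i, h (s i)) - n * a) := by
      rw [← Finset.mul_sum, Finset.sum_sub_distrib, Finset.sum_const, Finset.card_univ,
        Fintype.card_fin, nsmul_eq_mul]
    rw [hsum]
    have hs' : (n : ℝ) * (m + t) ≤ ∑ i, h (s i) := hs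
    have : 0 ≤ (∑ i, h (s i)) - n * a := by rw [ha]; linarith
    exact mul_nonneg hl0.le this
  -- step 2: product structure
  have step2 : EE (OI.iid q n) (fun s => ∏ i, ENNReal.ofReal (g (s i)))
      = (EE q fun z => ENNReal.ofReal (g z)) ^ n := EE_iid q (fun z => ENNReal.ofReal (g z)) n
  -- step 3: convert to a real expectation
  have step3 : (EE q fun z => ENNReal.ofReal (g z)) = ENNReal.ofReal (OI.pexp q g) :=
    EE_ofReal q g hgpos hgB
  -- step 4: bound the moment generating function
  have step4 : OI.pexp q g ≤ Real.exp (18 * l ^ 2 - l * t) := by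
    set K := Real.exp (9 * l ^ 2) - l * a with hK
    have hpt : ∀ z, g z ≤ l * h z + K := by
      intro z
      have e1 := exp_le_add_exp_sq (l * (h z - a))
      have e2 : (l * (h z - a)) ^ 2 ≤ 9 * l ^ 2 := by
        have h1 := abs_le.mp (hga z)
        have h9 : 0 ≤ l ^ 2 * (9 - (h z - a) ^ 2) :=
          mul_nonneg (sq_nonneg l) (by nlinarith [h1.1, h1.2])
        nlinarith [h9]
      have e3 : Real.exp ((l * (h z - a)) ^ 2) ≤ Real.exp (9 * l ^ 2) := Real.exp_le_exp.mpr e2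
      have e4 : g z ≤ l * (h z - a) + Real.exp (9 * l ^ 2) := by
        calc g z ≤ l * (h z - a) + Real.exp ((l * (h z - a)) ^ 2) := e1
          _ ≤ l * (h z - a) + Real.exp (9 * l ^ 2) := by linarith
      rw [hK]; linarith [e4, mul_sub l (h z) a]
    have hsum_g : Summable fun z => (q z).toReal * g z :=
      summable_wf q (fun z => by rw [abs_of_nonneg (hgpos z)]; exact hgB z)
    have hsum_lin : Summable fun z => (q z).toReal * (l * h z + K) := by
      refine summable_wf q (B := l + |K|) (fun z => ?_)
      calc |l * h z + K| ≤ |l * h z| + |K| := abs_add_le _ _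
        _ ≤ l + |K| := by
            rw [abs_mul, abs_of_pos hl0]
            have := hb z
            nlinarith
    have hmono := pexp_mono q hsum_g hsum_lin hpt
    rw [pexp_smul_add_const q h l K (summable_wf q hb), hm] at hmono
    have e5 : l * m + K = Real.exp (9 * l ^ 2) - l * t := by rw [hK, ha]; ring
    have e6 : Real.exp (9 * l ^ 2) - l * t ≤ Real.exp (18 * l ^ 2 - l * t) := by
      have f1 : Real.exp (9 * l ^ 2) ≤ 1 + 9 * l ^ 2 + (9 * l ^ 2) ^ 2 := by
        apply exp_le_one_add
        rw [abs_of_nonneg (by positivity)]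
        nlinarith
      have f2 : (9 * l ^ 2) ^ 2 ≤ 9 * l ^ 2 := by
        have hll : l ^ 2 ≤ 1 / 1296 := by nlinarith
        nlinarith [sq_nonneg l, mul_le_mul_of_nonneg_left hll (by positivity : (0:ℝ) ≤ 81 * l ^ 2)]
      have f3 : Real.exp (9 * l ^ 2) - l * t ≤ 1 + (18 * l ^ 2 - l * t) := by linarith
      have f4 : (18 * l ^ 2 - l * t) + 1 ≤ Real.exp (18 * l ^ 2 - l * t) :=
        Real.add_one_le_exp _
      linarith
    linarith
  -- assemble
  have hfinal : ((ENNReal.ofReal (Real.exp (18 * l ^ 2 - l * t)))) ^ n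
      = ENNReal.ofReal (Real.exp (-((n : ℝ) * (t ^ 2 / 72)))) := by
    rw [← ENNReal.ofReal_pow (Real.exp_pos _).le, ← Real.exp_nat_mul]
    congr 1
    rw [hl]
    ring
  calc OI.prob (OI.iid q n) {s | (n : ℝ) * (m + t) ≤ ∑ i, h (s i)}
      ≤ (EE q fun z => ENNReal.ofReal (g z)) ^ n := step1.trans (le_of_eq step2)
    _ ≤ (ENNReal.ofReal (Real.exp (18 * l ^ 2 - l * t))) ^ n := by
        rw [step3]
        exact pow_le_pow_left' (ENNReal.ofReal_le_ofReal step4) n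
    _ = _ := hfinal


variable {α : Type*} {β : Type*} {X : Type*}

lemma prob_bind_pure_le (q : PMF α) (learn : α → β) (E : Set β) (G : Set α)
    (hG : ∀ s ∈ G, learn s ∈ E) :
    OI.prob q G ≤ OI.prob (q.bind fun s => PMF.pure (learn s)) E := by
  rw [OI.prob, OI.prob, PMF.toOuterMeasure_bind_apply, PMF.toOuterMeasure_apply]
  refine ENNReal.tsum_le_tsum fun a => ?_
  rw [PMF.toOuterMeasure_pure_apply]
  by_cases ha : a ∈ G
  · rw [Set.indicator_of_mem ha, if_pos (hG a ha), mul_one]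
  · simp [Set.indicator_of_notMem ha]

lemma exDist_apply (μ : PMF X) (p : X → ℝ) (x : X) (b : Bool) :
    OI.exDist μ p (x, b) = μ x * OI.bern (p x) b := by
  rw [OI.exDist, PMF.bind_apply]
  rw [tsum_eq_single x (fun x' hx' => ?_)]
  · rw [PMF.map_apply]
    congr 1
    rw [tsum_eq_single b (fun o ho => ?_)]
    · simp
    · rw [if_neg]
      simp [Prod.ext_iff, ho.symm]
  · rw [PMF.map_apply]
    convert mul_zero _
    rw [ENNReal.tsum_eq_zero]
    intro o
    rw [if_neg]
    simp only [Prod.ext_iff, not_and]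
    intro h
    exact absurd h.symm hx'

lemma bern_true_toReal {r : ℝ} (h0 : 0 ≤ r) (h1 : r ≤ 1) : (OI.bern r true).toReal = r := by
  rw [OI.bern, PMF.bernoulli_apply]
  simp only [Bool.cond_true]
  rw [min_eq_left (Real.toNNReal_le_one.mpr h1), ENNReal.coe_toReal, Real.coe_toNNReal _ h0]

lemma pexp_exDist (μ : PMF X) (p : X → ℝ) (hp : OI.Predictor p) (c : X → ℝ) :
    OI.pexp (OI.exDist μ p) (fun z => if z.2 then c z.1 else 0) = OI.inn μ p c := by
  unfold OI.inn OI.pexp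
  have hinj : Function.Injective (fun x : X => (x, true)) := fun a b h =>
    (Prod.ext_iff.mp h).1
  rw [← Function.Injective.tsum_eq hinj (f := fun z : X × Bool =>
      ((OI.exDist μ p) z).toReal * (if z.2 then c z.1 else 0)) ?_]
  · refine tsum_congr fun x => ?_
    simp only [if_pos]
    rw [exDist_apply, ENNReal.toReal_mul, bern_true_toReal (hp x).1 (hp x).2]
    ring
  · rintro ⟨x, b⟩ hz
    cases b
    · simp at hz
    · exact ⟨x, rfl⟩

lemma pexp_neg (q : PMF α) (f : α → ℝ) :
    OI.pexp q (fun a => -(f a)) = -OI.pexp q f := by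
  unfold OI.pexp
  simp_rw [mul_neg]
  rw [tsum_neg]

lemma inn_comm (μ : PMF X) (f g : X → ℝ) : OI.inn μ f g = OI.inn μ g f := by
  unfold OI.inn OI.pexp
  exact tsum_congr fun x => by ring

lemma abs_fun_mul_le {f g : X → ℝ} {Bf Bg : ℝ} (hf : ∀ x, |f x| ≤ Bf) (hg : ∀ x, |g x| ≤ Bg) :
    ∀ x, |f x * g x| ≤ Bf * Bg := fun x => by
  rw [abs_mul]
  exact mul_le_mul (hf x) (hg x) (abs_nonneg _) ((abs_nonneg _).trans (hf x))

lemma abs_inn_le (μ : PMF X) {f g : X → ℝ} {Bf Bg : ℝ} (hf : ∀ x, |f x| ≤ Bf)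
    (hg : ∀ x, |g x| ≤ Bg) : |OI.inn μ f g| ≤ Bf * Bg :=
  abs_pexp_le μ (abs_fun_mul_le hf hg)

lemma inn_sub_left (μ : PMF X) (f₁ f₂ g : X → ℝ) {B₁ B₂ Bg : ℝ}
    (h₁ : ∀ x, |f₁ x| ≤ B₁) (h₂ : ∀ x, |f₂ x| ≤ B₂) (hg : ∀ x, |g x| ≤ Bg) :
    OI.inn μ (f₁ - f₂) g = OI.inn μ f₁ g - OI.inn μ f₂ g := by
  unfold OI.inn
  have e : (fun x => (f₁ - f₂) x * g x) = fun x => f₁ x * g x - f₂ x * g x := by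
    funext x; simp only [Pi.sub_apply]; ring
  rw [e]
  exact pexp_sub μ _ _ (summable_wf μ (abs_fun_mul_le h₁ hg)) (summable_wf μ (abs_fun_mul_le h₂ hg))

lemma inn_add_left (μ : PMF X) (f₁ f₂ g : X → ℝ) {B₁ B₂ Bg : ℝ}
    (h₁ : ∀ x, |f₁ x| ≤ B₁) (h₂ : ∀ x, |f₂ x| ≤ B₂) (hg : ∀ x, |g x| ≤ Bg) :
    OI.inn μ (fun x => f₁ x + f₂ x) g = OI.inn μ f₁ g + OI.inn μ f₂ g := by
  unfold OI.inn
  have e : (fun x => (f₁ x + f₂ x) * g x) = fun x => f₁ x * g x + f₂ x * g x := by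
    funext x; ring
  rw [e]
  exact pexp_add μ _ _ (summable_wf μ (abs_fun_mul_le h₁ hg)) (summable_wf μ (abs_fun_mul_le h₂ hg))

lemma dnorm_le (μ : PMF X) (F : Set (X → ℝ)) (f : X → ℝ) {ε : ℝ} (hε : 0 ≤ ε)
    (h : ∀ g ∈ F, |OI.inn μ f g| ≤ ε) : OI.dnorm μ F f ≤ ε := by
  apply Real.sSup_le _ hε
  rintro x ⟨g, hg, rfl⟩
  exact h g hg

lemma le_dnorm (μ : PMF X) {F : Set (X → ℝ)} {g : X → ℝ} (hg : g ∈ F) (f : X → ℝ)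
    {B : ℝ} (hB : ∀ g' ∈ F, |OI.inn μ f g'| ≤ B) : |OI.inn μ f g| ≤ OI.dnorm μ F f :=
  le_csSup ⟨B, by rintro x ⟨g', hg', rfl⟩; exact hB g' hg'⟩ (Set.mem_image_of_mem _ hg)

lemma covN_compare {X : Type} (μ : PMF X) (P D : Set (X → ℝ))
    (hP : ∀ p ∈ P, OI.Predictor p) (hD : ∀ d ∈ D, OI.Dist1 d) (ε : ℝ) (hε : 0 < ε) :
    OI.covN μ (P - P) D (ε / 2) ≤ OI.covN μ P D (ε / 4) := by
  unfold OI.covN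
  refine le_iInf₂ fun C hC => ?_
  refine iInf₂_le C ?_
  obtain ⟨hCD, hcov⟩ := hC
  refine ⟨hCD, fun g hg => ?_⟩
  obtain ⟨c, hcC, hdn⟩ := hcov g hg
  refine ⟨c, hcC, ?_⟩
  have hgb : ∀ x, |g x| ≤ 1 := fun x => abs_le.mpr ⟨(hD g hg x).1, (hD g hg x).2⟩
  have hcb : ∀ x, |c x| ≤ 1 := fun x => abs_le.mpr ⟨(hD c (hCD hcC) x).1, (hD c (hCD hcC) x).2⟩
  have hgc : ∀ x, |(g - c) x| ≤ 2 := fun x => by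
    simp only [Pi.sub_apply]
    calc |g x - c x| ≤ |g x| + |c x| := abs_sub _ _
      _ ≤ 2 := by linarith [hgb x, hcb x]
  have hPb : ∀ p' ∈ P, ∀ x, |p' x| ≤ 1 := fun p' hp' x =>
    abs_le.mpr ⟨by linarith [(hP p' hp' x).1], (hP p' hp' x).2⟩
  apply dnorm_le μ _ _ (by linarith)
  intro q hq
  rw [Set.mem_sub] at hq
  obtain ⟨p₁, hp₁, p₂, hp₂, rfl⟩ := hq
  have hsplit : OI.inn μ (g - c) (p₁ - p₂) = OI.inn μ (g - c) p₁ - OI.inn μ (g - c) p₂ := by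
    rw [inn_comm, inn_sub_left μ p₁ p₂ (g - c) (hPb p₁ hp₁) (hPb p₂ hp₂) hgc,
      inn_comm μ p₁, inn_comm μ p₂]
  have h₁ : |OI.inn μ (g - c) p₁| ≤ OI.dnorm μ P (g - c) :=
    le_dnorm μ hp₁ _ (fun p' hp' => abs_inn_le μ hgc (hPb p' hp'))
  have h₂ : |OI.inn μ (g - c) p₂| ≤ OI.dnorm μ P (g - c) :=
    le_dnorm μ hp₂ _ (fun p' hp' => abs_inn_le μ hgc (hPb p' hp'))
  rw [hsplit]
  calc |OI.inn μ (g - c) p₁ - OI.inn μ (g - c) p₂|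
      ≤ |OI.inn μ (g - c) p₁| + |OI.inn μ (g - c) p₂| := abs_sub _ _
    _ ≤ ε / 4 + ε / 4 := by linarith [h₁, h₂, hdn]
    _ = ε / 2 := by ring

open Classical in
/-- A chooser for the learner. -/
def choosePred {X : Type*} (P : Set (X → ℝ)) (p₀ : X → ℝ) (Q : (X → ℝ) → Prop) : X → ℝ :=
  if h : ∃ p, p ∈ P ∧ Q p then h.choose else p₀

lemma choosePred_spec {X : Type*} {P : Set (X → ℝ)} {p₀ : X → ℝ} {Q : (X → ℝ) → Prop}
    (h : ∃ p, p ∈ P ∧ Q p) : choosePred P p₀ Q ∈ P ∧ Q (choosePred P p₀ Q) := by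
  rw [choosePred]
  rw [dif_pos h]
  exact ⟨h.choose_spec.1, h.choose_spec.2⟩

lemma main_learner {X : Type} (μ : PMF X) (P D : Set (X → ℝ))
    (hPne : P.Nonempty) (hP : ∀ p ∈ P, OI.Predictor p) (hD : ∀ d ∈ D, OI.Dist1 d)
    (ε δ : ℝ) (hε : 0 < ε) (hε1 : ε ≤ 1) (hδ : δ ∈ Set.Ioo (0:ℝ) 1)
    (C : Set (X → ℝ)) (hC : OI.IsCover μ (P - P) D (ε/2) C) (hCfin : C.Finite)
    (n : ℕ) (hn0 : 0 < n)
    (hn : 2 * (hCfin.toFinset.card : ℝ) * Real.exp (-((n:ℝ) * ((ε/4)^2/72))) ≤ δ) :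
    ∃ A : OI.Learner X n, OI.DSRL μ P D ε δ n A := by
  classical
  set t : ℝ := ε / 4 with htdef
  have ht : 0 < t := by positivity
  set Cf := hCfin.toFinset with hCf
  set f : (X → ℝ) → X × Bool → ℝ := fun c z => if z.2 then c z.1 else 0 with hf
  set Emp : (X → ℝ) → (Fin n → X × Bool) → ℝ := fun c s => ∑ i, f c (s i) with hEmp
  set A : OI.Learner X n := fun s => PMF.pure (choosePred P hPne.choose
    (fun p => ∀ c ∈ Cf, |(n:ℝ) * OI.inn μ p c - Emp c s| ≤ n * t)) with hA
  refine ⟨A, fun pstar hpstar => ?_⟩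
  have hpredstar : OI.Predictor pstar := hP pstar hpstar
  have hPb : ∀ p' ∈ P, ∀ x, |p' x| ≤ 1 := fun p' hp' x =>
    abs_le.mpr ⟨by linarith [(hP p' hp' x).1], (hP p' hp' x).2⟩
  have hCb : ∀ c ∈ Cf, ∀ x, |c x| ≤ 1 := by
    intro c hc x
    have hcD : c ∈ D := hC.1 (hCfin.mem_toFinset.mp hc)
    exact abs_le.mpr ⟨(hD c hcD x).1, (hD c hcD x).2⟩
  set m : (X → ℝ) → ℝ := fun c => OI.inn μ pstar c with hm
  set q : PMF (X × Bool) := OI.exDist μ pstar with hq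
  set G : Set (Fin n → X × Bool) := {s | ∀ c ∈ Cf, |Emp c s - n * m c| ≤ n * t} with hG
  -- on the good event the learner succeeds
  have hgood : ∀ s ∈ G, choosePred P hPne.choose
      (fun p => ∀ c ∈ Cf, |(n:ℝ) * OI.inn μ p c - Emp c s| ≤ n * t) ∈
      {p | OI.Predictor p ∧ OI.dnorm μ D (p - pstar) ≤ ε} := by
    intro s hs
    have hex : ∃ p, p ∈ P ∧ ∀ c ∈ Cf, |(n:ℝ) * OI.inn μ p c - Emp c s| ≤ n * t :=
      ⟨pstar, hpstar, fun c hc => by rw [abs_sub_comm]; exact hs c hc⟩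
    obtain ⟨hpP, hpgood⟩ := choosePred_spec hex
    set p := choosePred P hPne.choose
      (fun p => ∀ c ∈ Cf, |(n:ℝ) * OI.inn μ p c - Emp c s| ≤ n * t) with hp
    refine ⟨hP p hpP, ?_⟩
    have hdiffb : ∀ x, |(p - pstar) x| ≤ 1 := fun x => by
      simp only [Pi.sub_apply]
      have h1 := (hP p hpP x).1; have h2 := (hP p hpP x).2
      have h3 := (hP pstar hpstar x).1; have h4 := (hP pstar hpstar x).2
      rw [abs_le]; constructor <;> linarith
    apply dnorm_le μ D _ hε.le
    intro d hd
    have hdb : ∀ x, |d x| ≤ 1 := fun x => abs_le.mpr ⟨(hD d hd x).1, (hD d hd x).2⟩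
    obtain ⟨c, hcC, hcd⟩ := hC.2 d hd
    have hcCf : c ∈ Cf := hCfin.mem_toFinset.mpr hcC
    have hcb : ∀ x, |c x| ≤ 1 := hCb c hcCf
    have hdcb : ∀ x, |d x - c x| ≤ 2 := fun x => by
      have := hdb x; have := hcb x
      rw [abs_le] at *; constructor <;> [linarith [this.1]; linarith [this.2]]
    -- split the inner product
    have hsplit : OI.inn μ (p - pstar) d =
        OI.inn μ (fun x => d x - c x) (p - pstar) + OI.inn μ c (p - pstar) := by
      rw [inn_comm]
      have : d = fun x => (d x - c x) + c x := by funext x; ring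
      nth_rewrite 1 [this]
      exact inn_add_left μ _ c (p - pstar) hdcb hcb hdiffb
    -- first term bounded by the cover property
    have hQb : ∀ q' ∈ P - P, ∀ x, |q' x| ≤ 1 := by
      intro q' hq' x
      rw [Set.mem_sub] at hq'
      obtain ⟨p₁, hp₁, p₂, hp₂, rfl⟩ := hq'
      simp only [Pi.sub_apply]
      have h1 := (hP p₁ hp₁ x).1; have h2 := (hP p₁ hp₁ x).2
      have h3 := (hP p₂ hp₂ x).1; have h4 := (hP p₂ hp₂ x).2
      rw [abs_le]; constructor <;> linarith
    have hterm1 : |OI.inn μ (fun x => d x - c x) (p - pstar)| ≤ ε / 2 := by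
      have hmem : p - pstar ∈ P - P := Set.sub_mem_sub hpP hpstar
      have hfeq : (fun x => d x - c x) = d - c := rfl
      rw [hfeq]
      exact (le_dnorm μ hmem (d - c)
        (fun q' hq' => abs_inn_le μ (fun x => by simpa using hdcb x) (hQb q' hq'))).trans hcd
    -- second term bounded by estimation accuracy
    have hterm2 : |OI.inn μ c (p - pstar)| ≤ ε / 2 := by
      have hlin : OI.inn μ c (p - pstar) = OI.inn μ p c - OI.inn μ pstar c := by
        rw [inn_comm, inn_sub_left μ p pstar c (hPb p hpP) (hPb pstar hpstar) hcb]
      rw [hlin]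
      have h1 := hpgood c hcCf
      have h2 := hs c hcCf
      have h3 : |(n:ℝ) * OI.inn μ p c - n * OI.inn μ pstar c| ≤ 2 * (n * t) := by
        have := abs_add_le ((n:ℝ) * OI.inn μ p c - Emp c s) (Emp c s - n * m c)
        simp only [hm] at this ⊢
        calc |(n:ℝ) * OI.inn μ p c - n * OI.inn μ pstar c|
            = |((n:ℝ) * OI.inn μ p c - Emp c s) + (Emp c s - n * OI.inn μ pstar c)| := by
              ring_nf
          _ ≤ |(n:ℝ) * OI.inn μ p c - Emp c s| + |Emp c s - n * OI.inn μ pstar c| :=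
              abs_add_le _ _
          _ ≤ 2 * (n * t) := by linarith
      have hn' : (0:ℝ) < n := Nat.cast_pos.mpr hn0
      have h4 : (n:ℝ) * |OI.inn μ p c - OI.inn μ pstar c| ≤ 2 * (n * t) := by
        have habs : (n:ℝ) * |OI.inn μ p c - OI.inn μ pstar c|
            = |(n:ℝ) * OI.inn μ p c - n * OI.inn μ pstar c| := by
          rw [← mul_sub, abs_mul, abs_of_pos hn']
        rw [habs]; exact h3
      have h5 : |OI.inn μ p c - OI.inn μ pstar c| ≤ 2 * t := by
        rw [← mul_le_mul_iff_right₀ hn']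
        calc (n:ℝ) * |OI.inn μ p c - OI.inn μ pstar c| ≤ 2 * (n * t) := h4
          _ = (n:ℝ) * (2 * t) := by ring
      rw [htdef] at h5; linarith [h5]
    calc |OI.inn μ (p - pstar) d| ≤
        |OI.inn μ (fun x => d x - c x) (p - pstar)| + |OI.inn μ c (p - pstar)| := by
          rw [hsplit]; exact abs_add_le _ _
      _ ≤ ε := by linarith
  -- probability of the good event
  have hpG : ENNReal.ofReal (1 - δ) ≤ OI.prob (OI.iid q n) G := by
    -- each bad event
    have htail : ∀ c ∈ Cf, OI.prob (OI.iid q n) {s | ¬ |Emp c s - n * m c| ≤ n * t} ≤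
        2 * ENNReal.ofReal (Real.exp (-((n:ℝ) * (t^2/72)))) := by
      intro c hc
      have hcb := hCb c hc
      have hfb : ∀ z : X × Bool, |f c z| ≤ 1 := by
        rintro ⟨x, b⟩
        cases b <;> simp [hf]
        exact hcb x
      have hmean : OI.pexp q (f c) = m c := pexp_exDist μ pstar hpredstar c
      have hmb : |m c| ≤ 1 := by
        have := abs_inn_le μ (fun x => abs_le.mpr ⟨by linarith [(hpredstar x).1],
          (hpredstar x).2⟩) hcb
        simpa using this
      have ht1 : t ≤ 1 := by rw [htdef]; linarith
      have hUb := tail_bound q (f c) (m c) t hfb hmean hmb ht ht1 n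
      have hneg_mean : OI.pexp q (fun z => -(f c z)) = -(m c) := by rw [pexp_neg, hmean]
      have hnegb : ∀ z, |-(f c z)| ≤ 1 := fun z => by rw [abs_neg]; exact hfb z
      have hnegm : |(-(m c))| ≤ 1 := by rw [abs_neg]; exact hmb
      have hLb := tail_bound q (fun z => -(f c z)) (-(m c)) t hnegb hneg_mean hnegm ht ht1 n
      have hincl : {s : Fin n → X × Bool | ¬ |Emp c s - n * m c| ≤ n * t} ⊆
          {s | (n:ℝ) * (m c + t) ≤ ∑ i, f c (s i)} ∪
          {s | (n:ℝ) * (-(m c) + t) ≤ ∑ i, -(f c (s i))} := by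
        intro s hs
        simp only [Set.mem_setOf_eq, not_le] at hs
        rcases lt_abs.mp hs with h | h
        · left
          simp only [Set.mem_setOf_eq]
          have hEq : Emp c s = ∑ i, f c (s i) := rfl
          rw [← hEq]; linarith
        · right
          simp only [Set.mem_setOf_eq]
          have hEq : ∑ i, -(f c (s i)) = -(Emp c s) := by
            rw [hEmp]; rw [← Finset.sum_neg_distrib]
          rw [hEq]; linarith
      calc OI.prob (OI.iid q n) {s | ¬ |Emp c s - n * m c| ≤ n * t}
          ≤ OI.prob (OI.iid q n) ({s | (n:ℝ) * (m c + t) ≤ ∑ i, f c (s i)} ∪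
            {s | (n:ℝ) * (-(m c) + t) ≤ ∑ i, -(f c (s i))}) := prob_mono _ hincl
        _ ≤ OI.prob (OI.iid q n) {s | (n:ℝ) * (m c + t) ≤ ∑ i, f c (s i)} +
            OI.prob (OI.iid q n) {s | (n:ℝ) * (-(m c) + t) ≤ ∑ i, -(f c (s i))} :=
            prob_union_le _ _ _
        _ ≤ ENNReal.ofReal (Real.exp (-((n:ℝ) * (t^2/72)))) +
            ENNReal.ofReal (Real.exp (-((n:ℝ) * (t^2/72)))) := add_le_add hUb hLb
        _ = 2 * ENNReal.ofReal (Real.exp (-((n:ℝ) * (t^2/72)))) := (two_mul _).symm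
    have hGc : Gᶜ ⊆ ⋃ c ∈ Cf, {s | ¬ |Emp c s - n * m c| ≤ n * t} := by
      intro s hs
      simp only [hG, Set.mem_compl_iff, Set.mem_setOf_eq, not_forall] at hs
      obtain ⟨c, hc, hnc⟩ := hs
      exact Set.mem_biUnion hc hnc
    have hbad : OI.prob (OI.iid q n) Gᶜ ≤ ENNReal.ofReal δ := by
      calc OI.prob (OI.iid q n) Gᶜ
          ≤ ∑ c ∈ Cf, OI.prob (OI.iid q n) {s | ¬ |Emp c s - n * m c| ≤ n * t} :=
            (prob_mono _ hGc).trans (prob_biUnion_le _ _ _)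
        _ ≤ ∑ _c ∈ Cf, 2 * ENNReal.ofReal (Real.exp (-((n:ℝ) * (t^2/72)))) :=
            Finset.sum_le_sum htail
        _ = Cf.card * (2 * ENNReal.ofReal (Real.exp (-((n:ℝ) * (t^2/72))))) := by
            rw [Finset.sum_const, nsmul_eq_mul]
        _ ≤ ENNReal.ofReal δ := by
            have e1 : (Cf.card : ℝ≥0∞) = ENNReal.ofReal (Cf.card : ℝ) := by
              rw [ENNReal.ofReal_natCast]
            have e2 : (2 : ℝ≥0∞) = ENNReal.ofReal 2 := by norm_num
            rw [e1, e2, ← ENNReal.ofReal_mul (by norm_num), ← ENNReal.ofReal_mul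
              (by positivity)]
            apply ENNReal.ofReal_le_ofReal
            calc (Cf.card : ℝ) * (2 * Real.exp (-((n:ℝ) * (t^2/72))))
                = 2 * (Cf.card : ℝ) * Real.exp (-((n:ℝ) * (t^2/72))) := by ring
              _ ≤ δ := hn
    have huniv : (1:ℝ≥0∞) ≤ OI.prob (OI.iid q n) G + OI.prob (OI.iid q n) Gᶜ := by
      have h1 := prob_union_le (OI.iid q n) G Gᶜ
      rw [Set.union_compl_self] at h1
      exact (le_of_eq (prob_univ _).symm).trans h1
    have heq : ENNReal.ofReal (1 - δ) = 1 - ENNReal.ofReal δ := by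
      rw [ENNReal.ofReal_sub 1 hδ.1.le, ENNReal.ofReal_one]
    rw [heq, tsub_le_iff_right]
    calc (1:ℝ≥0∞) ≤ OI.prob (OI.iid q n) G + OI.prob (OI.iid q n) Gᶜ := huniv
      _ ≤ OI.prob (OI.iid q n) G + ENNReal.ofReal δ := add_le_add_right hbad _
  unfold OI.Achieves OI.outDist
  rw [hA]
  exact hpG.trans (prob_bind_pure_le (OI.iid q n) _ _ G hgood)

end OIAux


/-- sample complexity upper bound for distribution-specific realizable OI:
`SAMP-DS-R(P,D,ε,δ,μ) ≤ O(ε⁻²(log N_{μ,Q}(D,ε/2) + log(2/δ)))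
 ≤ O(ε⁻²(log N_{μ,P}(D,ε/4) + log(2/δ)))`, where `Q = P − P`. -/
theorem statement_4 :
    ∃ c : ℝ, 0 < c ∧
      ∀ (X : Type) (_ : Nonempty X) (μ : PMF X) (P D : Set (X → ℝ)),
        P.Nonempty → (∀ p ∈ P, Predictor p) →
        D.Nonempty → (∀ d ∈ D, Dist1 d) →
        ∀ ε δ : ℝ, 0 < ε → δ ∈ Set.Ioo (0 : ℝ) 1 →
          covN μ (P - P) D (ε / 2) ≤ covN μ P D (ε / 4) ∧
          (covN μ (P - P) D (ε / 2) ≠ ⊤ →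
            ∃ n : ℕ, SAMPDSR μ P D ε δ ≤ (n : ℕ∞) ∧
              (n : ℝ) ≤ c * ε⁻¹ ^ 2 *
                (elog2 (covN μ (P - P) D (ε / 2)) + Real.logb 2 (2 / δ))) := by
  refine ⟨2000, by norm_num, ?_⟩
  intro X hX μ P D hPne hP hDne hD ε δ hε hδ
  refine ⟨OIAux.covN_compare μ P D hP hD ε hε, ?_⟩
  intro hne
  set K := OI.covN μ (P - P) D (ε / 2) with hK
  obtain ⟨C, hC, hCle⟩ : ∃ C, OI.IsCover μ (P - P) D (ε / 2) C ∧ C.encard ≤ K := by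
    have h2 : (⨅ (C : Set (X → ℝ)) (_ : OI.IsCover μ (P - P) D (ε / 2) C), C.encard)
        < K + 1 := by
      have h3 : K < K + 1 := (ENat.lt_add_one_iff hne).mpr le_rfl
      rw [hK, OI.covN] at h3
      exact h3
    obtain ⟨C, hC2⟩ := iInf_lt_iff.mp h2
    obtain ⟨hCc, hC3⟩ := iInf_lt_iff.mp hC2
    exact ⟨C, hCc, (ENat.lt_add_one_iff hne).mp hC3⟩
  have hCfin : C.Finite := by
    rw [← Set.encard_lt_top_iff]
    exact lt_of_le_of_lt hCle (lt_top_iff_ne_top.mpr hne)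
  set N : ℕ := hCfin.toFinset.card with hN
  have hNenc : C.encard = (N : ℕ∞) := hCfin.encard_eq_coe_toFinset_card
  set NN : ℕ := K.toNat with hNN
  have hNle : N ≤ NN := by
    have h4 := ENat.toNat_le_toNat (hNenc ▸ hCle) hne
    simpa using h4
  have hN1 : 1 ≤ N := by
    obtain ⟨d, hd⟩ := hDne
    obtain ⟨c, hcC, -⟩ := hC.2 d hd
    exact Finset.card_pos.mpr ⟨c, hCfin.mem_toFinset.mpr hcC⟩
  have hNN1 : 1 ≤ NN := hN1.trans hNle
  have hδ0 := hδ.1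
  have hδ1 := hδ.2
  have hlogδ : 0 < Real.logb 2 (2 / δ) :=
    Real.logb_pos (by norm_num) (by rw [lt_div_iff₀ hδ0]; linarith)
  have helog : OI.elog2 K = Real.logb 2 (NN : ℝ) := by rw [OI.elog2, ← hNN]
  rcases le_or_gt ε 1 with hε1 | hε1
  · -- main case
    set L : ℝ := Real.log (2 * N / δ) with hL
    have hlog2pos : (0:ℝ) < Real.log 2 := Real.log_pos (by norm_num)
    have hNpos : (0:ℝ) < N := by exact_mod_cast hN1
    have hN1R : (1:ℝ) ≤ (N:ℝ) := by exact_mod_cast hN1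
    have hL2 : Real.log 2 ≤ L := by
      apply Real.log_le_log (by norm_num)
      rw [le_div_iff₀ hδ0]
      nlinarith [hN1R, hδ1]
    have hLpos : 0 < L := lt_of_lt_of_le hlog2pos hL2
    set n : ℕ := ⌈1152 * ε⁻¹ ^ 2 * L⌉₊ with hn
    have harg : (0:ℝ) < 1152 * ε⁻¹ ^ 2 * L := by positivity
    have hn0 : 0 < n := Nat.ceil_pos.mpr harg
    have hnge : 1152 * ε⁻¹ ^ 2 * L ≤ (n : ℝ) := Nat.le_ceil _
    have hcon : 2 * (N : ℝ) * Real.exp (-((n:ℝ) * ((ε/4)^2/72))) ≤ δ := by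
      have h1 : L ≤ (n : ℝ) * ((ε/4)^2/72) := by
        have e : (1152 : ℝ) * ε⁻¹ ^ 2 * L * ((ε/4)^2/72) = L := by
          field_simp
          ring
        calc L = 1152 * ε⁻¹ ^ 2 * L * ((ε/4)^2/72) := e.symm
          _ ≤ (n : ℝ) * ((ε/4)^2/72) := mul_le_mul_of_nonneg_right hnge (by positivity)
      have h2 : Real.exp (-((n:ℝ) * ((ε/4)^2/72))) ≤ Real.exp (-L) :=
        Real.exp_le_exp.mpr (by linarith)
      have h3 : Real.exp (-L) = δ / (2 * N) := by
        rw [hL, Real.exp_neg, Real.exp_log (by positivity)]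
        field_simp
      calc 2 * (N : ℝ) * Real.exp (-((n:ℝ) * ((ε/4)^2/72)))
          ≤ 2 * (N : ℝ) * Real.exp (-L) := mul_le_mul_of_nonneg_left h2 (by positivity)
        _ = δ := by rw [h3]; field_simp
    obtain ⟨A, hA⟩ := OIAux.main_learner μ P D hPne hP hD ε δ hε hε1 hδ C hC hCfin n hn0 hcon
    refine ⟨n, ?_, ?_⟩
    · unfold OI.SAMPDSR
      exact iInf₂_le n ⟨A, hA⟩
    · have hup : (n : ℝ) ≤ 1152 * ε⁻¹ ^ 2 * L + 1 := le_of_lt (Nat.ceil_lt_add_one harg.le)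
      set L' : ℝ := Real.log (2 * NN / δ) with hL'
      have hNleR : (N:ℝ) ≤ (NN:ℝ) := by exact_mod_cast hNle
      have hLL : L ≤ L' := by
        apply Real.log_le_log (by positivity)
        gcongr
      have hrhs : Real.logb 2 (NN:ℝ) + Real.logb 2 (2/δ) = L' / Real.log 2 := by
        rw [Real.logb, Real.logb, ← add_div]
        congr 1
        rw [← Real.log_mul (by positivity) (by positivity), hL']
        congr 1
        have hNNpos : (0:ℝ) < NN := by exact_mod_cast hNN1
        field_simp
      rw [helog, hrhs]
      have hL2' : Real.log 2 ≤ L' := hL2.trans hLL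
      have hie : (1:ℝ) ≤ ε⁻¹ ^ 2 := by
        have h5 : (1:ℝ) ≤ ε⁻¹ := one_le_inv_iff₀.mpr ⟨hε, hε1⟩
        nlinarith
      have hl2b : Real.log 2 < 0.6931471808 := Real.log_two_lt_d9
      have hL'pos : 0 < L' := lt_of_lt_of_le hlog2pos hL2'
      have hxy : Real.log 2 ≤ ε⁻¹ ^ 2 * L' :=
        hL2'.trans (le_mul_of_one_le_left hL'pos.le hie)
      have hLL' : ε⁻¹ ^ 2 * L ≤ ε⁻¹ ^ 2 * L' :=
        mul_le_mul_of_nonneg_left hLL (by positivity)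
      have hy0 : (0:ℝ) ≤ ε⁻¹ ^ 2 * L' := le_trans hlog2pos.le hxy
      calc (n:ℝ) ≤ 1152 * ε⁻¹ ^ 2 * L + 1 := hup
        _ ≤ 1152 * (ε⁻¹ ^ 2 * L') + 1 := by
            have he2 : 1152 * ε⁻¹ ^ 2 * L = 1152 * (ε⁻¹ ^ 2 * L) := by ring
            linarith [hLL']
        _ ≤ 2000 * ε⁻¹ ^ 2 * (L' / Real.log 2) := by
            have he : 2000 * ε⁻¹ ^ 2 * (L' / Real.log 2)
                = 2000 * (ε⁻¹ ^ 2 * L') / Real.log 2 := by ring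
            rw [he, le_div_iff₀ hlog2pos]
            linarith [mul_le_mul_of_nonneg_left hl2b.le hy0, hxy]
  · -- trivial case: ε > 1, zero samples suffice
    have hDSRL : OI.DSRL μ P D ε δ 0 (fun _ => PMF.pure hPne.choose) := by
      intro pstar hpstar
      unfold OI.Achieves OI.outDist
      have hgood : ∀ s ∈ (Set.univ : Set (Fin 0 → X × Bool)), hPne.choose ∈
          {p | OI.Predictor p ∧ OI.dnorm μ D (p - pstar) ≤ ε} := by
        intro s _
        refine ⟨hP _ hPne.choose_spec, ?_⟩
        apply OIAux.dnorm_le μ D _ hε.le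
        intro d hd
        have h1 : |OI.inn μ (hPne.choose - pstar) d| ≤ 1 * 1 := by
          apply OIAux.abs_inn_le μ ?_ (fun x => abs_le.mpr ⟨(hD d hd x).1, (hD d hd x).2⟩)
          intro x
          simp only [Pi.sub_apply]
          have h1 := (hP _ hPne.choose_spec x).1
          have h2 := (hP _ hPne.choose_spec x).2
          have h3 := (hP pstar hpstar x).1
          have h4 := (hP pstar hpstar x).2
          rw [abs_le]; constructor <;> linarith
        linarith
      calc ENNReal.ofReal (1 - δ) ≤ 1 := ENNReal.ofReal_le_one.mpr (by linarith)
        _ = OI.prob (OI.iid (OI.exDist μ pstar) 0) Set.univ := (OIAux.prob_univ _).symm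
        _ ≤ _ := OIAux.prob_bind_pure_le _ _ _ _ hgood
    refine ⟨0, ?_, ?_⟩
    · unfold OI.SAMPDSR
      exact iInf₂_le 0 ⟨fun _ => PMF.pure hPne.choose, hDSRL⟩
    · have helogK : 0 ≤ OI.elog2 K := by
        rw [helog]
        exact Real.logb_nonneg (by norm_num) (by exact_mod_cast hNN1)
      simp only [Nat.cast_zero]
      apply mul_nonneg (by positivity)
      linarith
end
end
end
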